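/- Let t0 ∈ (0,1)^m and assume there exists an open neighborhood N(t0) ⊆ (0,1)^m of t0 such that for every t ∈ N(t0) the φ-projection of t on M = S(cl(Θ)) exists and is unique. Then the map S* : N(t0) → M, assigning to each t ∈ N(t0) its unique φ-projection on M, is continuous at t0. -/

import Mathlib

open Filter Topology

/-- The extended-real-valued integrand `f(v,w)` of a `φ`-divergence:
`f(v,w) = w·φ(v/w)` if `w > 0`, `f(v,0) = v·L` if `v > 0`, and `f(0,0) = 0`,
where `L = lim_{x→∞} φ(x)/x ∈ ℝ ∪ {∞}`. -/
noncomputable def phiF (φ : ℝ → ℝ) (L : EReal) (v w : ℝ) : EReal :=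
  if 0 < w then ((w * φ (v / w) : ℝ) : EReal)
  else if 0 < v then (v : EReal) * L
  else 0

/-- The `φ`-divergence `D_φ(s∣t) = Σ_{i=1}^m f(s_i, t_i)` of `s` relative to `t`. -/
noncomputable def Dphi (φ : ℝ → ℝ) (L : EReal) {m : ℕ} (s t : Fin m → ℝ) : EReal :=
  ∑ i, phiF φ L (s i) (t i)

/-- `p` is a `φ`-projection of `t` on `M`: `p ∈ M` and `D_φ(p∣t) = inf_{s ∈ M} D_φ(s∣t)`. -/
def IsPhiProj (φ : ℝ → ℝ) (L : EReal) {m : ℕ} (M : Set (Fin m → ℝ))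
    (t p : Fin m → ℝ) : Prop :=
  p ∈ M ∧ Dphi φ L p t = ⨅ s ∈ M, Dphi φ L s t

lemma ereal_coe_sum {m : ℕ} (f : Fin m → ℝ) :
    ((∑ i, f i : ℝ) : EReal) = ∑ i, ((f i : ℝ) : EReal) :=
  map_sum (⟨⟨Real.toEReal, EReal.coe_zero⟩, fun x y => EReal.coe_add x y⟩ : ℝ →+ EReal) f _

lemma Dphi_coe (φ : ℝ → ℝ) (L : EReal) {m : ℕ} (s t : Fin m → ℝ) (ht : ∀ i, 0 < t i) :
    Dphi φ L s t = ((∑ i, t i * φ (s i / t i) : ℝ) : EReal) := by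
  rw [Dphi, ereal_coe_sum]
  exact Finset.sum_congr rfl fun i _ => by simp [phiF, ht i]

/-- under the framework assumptions, if on an open neighborhood
`N ⊆ (0,1)^m` of `t0` the `φ`-projection on `M = S(cl Θ)` exists and is unique,
then the projection map `S*` (assigning to each `t ∈ N` its unique `φ`-projection
on `M`) is continuous at `t0`. -/
theorem statement9 (m k : ℕ) (hm : 1 ≤ m) (hk : 1 ≤ k) (hkm : k ≤ m)
    (φ : ℝ → ℝ) (L : EReal)
    (hφconv : ConvexOn ℝ (Set.Ici 0) φ)
    (hφ0 : ContinuousWithinAt φ (Set.Ici 0) 0)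
    (hL : Tendsto (fun x : ℝ => ((φ x / x : ℝ) : EReal)) atTop (𝓝 L))
    (hφsc : StrictConvexOn ℝ (Set.Ici (0 : ℝ)) φ)
    (hφC2 : ContDiffOn ℝ 2 φ (Set.Ioi (0 : ℝ)))
    (Θ : Set (Fin k → ℝ)) (hΘbd : Bornology.IsBounded Θ)
    (hΘint : (interior Θ).Nonempty)
    (S : (Fin k → ℝ) → (Fin m → ℝ))
    (hScont : ContinuousOn S (closure Θ))
    (hSinj : Set.InjOn S (closure Θ))
    (hSC2 : ContDiffOn ℝ 2 S (interior Θ))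
    (hSrange : ∀ θ ∈ closure Θ, ∀ i, S θ i ∈ Set.Icc (0 : ℝ) 1)
    (hSint : ∀ θ ∈ interior Θ, ∀ i, S θ i ∈ Set.Ioo (0 : ℝ) 1)
    (t0 : Fin m → ℝ) (ht0 : ∀ i, t0 i ∈ Set.Ioo (0 : ℝ) 1)
    (N : Set (Fin m → ℝ)) (hNopen : IsOpen N) (ht0N : t0 ∈ N)
    (hNsub : ∀ t ∈ N, ∀ i, t i ∈ Set.Ioo (0 : ℝ) 1)
    (Sstar : (Fin m → ℝ) → (Fin m → ℝ))
    (hSstar : ∀ t ∈ N, ∀ s, IsPhiProj φ L (S '' closure Θ) t s ↔ s = Sstar t) :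
    ContinuousWithinAt Sstar N t0 := by
  -- φ is continuous on [0, ∞)
  have hφcont : ContinuousOn φ (Set.Ici 0) := by
    intro x hx
    rcases eq_or_lt_of_le (Set.mem_Ici.mp hx : (0:ℝ) ≤ x) with h | h
    · rw [← h]; exact hφ0
    · exact ((hφC2.continuousOn.continuousAt (Ioi_mem_nhds h)).continuousWithinAt)
  -- M is compact
  set M : Set (Fin m → ℝ) := S '' closure Θ with hMdef
  have hCcp : IsCompact (closure Θ) := hΘbd.isCompact_closure
  have hMcp : IsCompact M := hCcp.image_of_continuousOn hScont
  have hM01 : ∀ s ∈ M, ∀ i, s i ∈ Set.Icc (0:ℝ) 1 := by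
    rintro s ⟨θ, hθ, rfl⟩ i; exact hSrange θ hθ i
  -- the real-valued divergence and its continuity
  set G : (Fin m → ℝ) × (Fin m → ℝ) → ℝ := fun p => ∑ i, p.2 i * φ (p.1 i / p.2 i) with hGdef
  set A : Set ((Fin m → ℝ) × (Fin m → ℝ)) :=
    {p | (∀ i, p.1 i ∈ Set.Icc (0:ℝ) 1) ∧ ∀ i, p.2 i ∈ Set.Ioo (0:ℝ) 1} with hAdef
  have hGc : ∀ p ∈ A, ContinuousWithinAt G A p := by
    intro p hp
    refine tendsto_finset_sum _ fun i _ => ?_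
    have h2 : ContinuousWithinAt (fun q : (Fin m → ℝ) × (Fin m → ℝ) => q.2 i) A p :=
      (((continuous_apply i).comp continuous_snd)).continuousWithinAt
    have h1 : ContinuousWithinAt (fun q : (Fin m → ℝ) × (Fin m → ℝ) => q.1 i) A p :=
      (((continuous_apply i).comp continuous_fst)).continuousWithinAt
    have hdiv : ContinuousWithinAt (fun q : (Fin m → ℝ) × (Fin m → ℝ) => q.1 i / q.2 i) A p :=
      h1.div h2 (ne_of_gt (hp.2 i).1)
    have hmapsto : Set.MapsTo (fun q : (Fin m → ℝ) × (Fin m → ℝ) => q.1 i / q.2 i) A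
        (Set.Ici (0:ℝ)) := fun q hq => div_nonneg (hq.1 i).1 (hq.2 i).1.le
    have hφcwa : ContinuousWithinAt (fun q : (Fin m → ℝ) × (Fin m → ℝ) => φ (q.1 i / q.2 i))
        A p := ContinuousWithinAt.comp (g := φ)
        (f := fun q : (Fin m → ℝ) × (Fin m → ℝ) => q.1 i / q.2 i)
        (hφcont _ (hmapsto hp)) hdiv hmapsto
    exact h2.mul hφcwa
  -- key: any limit of projections along a sequence tending to t0 equals `Sstar t0`
  have key : ∀ (v : ℕ → Fin m → ℝ), (∀ n, v n ∈ N) → Tendsto v atTop (𝓝 t0) →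
      ∀ (q : Fin m → ℝ), q ∈ M →
      Tendsto (fun n => Sstar (v n)) atTop (𝓝 q) → q = Sstar t0 := by
    intro v hvN hvlim q hqM hplim
    have hproj : ∀ n, IsPhiProj φ L M (v n) (Sstar (v n)) :=
      fun n => (hSstar (v n) (hvN n) (Sstar (v n))).mpr rfl
    have hq01 : ∀ i, q i ∈ Set.Icc (0:ℝ) 1 := hM01 q hqM
    have hqt0A : (q, t0) ∈ A := ⟨hq01, ht0⟩
    -- the pair sequence tends to (q, t0) within A
    have hpairA : ∀ n, (Sstar (v n), v n) ∈ A :=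
      fun n => ⟨hM01 _ (hproj n).1, hNsub _ (hvN n)⟩
    have hpair : Tendsto (fun n => (Sstar (v n), v n)) atTop (𝓝[A] (q, t0)) := by
      rw [tendsto_nhdsWithin_iff]
      exact ⟨hplim.prodMk_nhds hvlim, Eventually.of_forall hpairA⟩
    have hGlim : Tendsto (fun n => G (Sstar (v n), v n)) atTop (𝓝 (G (q, t0))) :=
      (hGc _ hqt0A).tendsto.comp hpair
    -- q minimizes Dφ(·|t0) over M
    have hqle : ∀ s ∈ M, Dphi φ L q t0 ≤ Dphi φ L s t0 := by
      intro s hsM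
      have hst0A : (s, t0) ∈ A := ⟨hM01 s hsM, ht0⟩
      have hpair' : Tendsto (fun n => ((s : Fin m → ℝ), v n)) atTop (𝓝[A] (s, t0)) := by
        rw [tendsto_nhdsWithin_iff]
        exact ⟨tendsto_const_nhds.prodMk_nhds hvlim,
          Eventually.of_forall fun n => ⟨hM01 s hsM, hNsub _ (hvN n)⟩⟩
      have hGlim' : Tendsto (fun n => G (s, v n)) atTop (𝓝 (G (s, t0))) :=
        (hGc _ hst0A).tendsto.comp hpair'
      have hineq : ∀ n, G (Sstar (v n), v n) ≤ G (s, v n) := by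
        intro n
        have hle : Dphi φ L (Sstar (v n)) (v n) ≤ Dphi φ L s (v n) := by
          rw [(hproj n).2]
          exact iInf₂_le s hsM
        have htpos : ∀ i, 0 < v n i := fun i => (hNsub _ (hvN n) i).1
        rw [Dphi_coe φ L _ _ htpos, Dphi_coe φ L _ _ htpos, EReal.coe_le_coe_iff] at hle
        exact hle
      have hG : G (q, t0) ≤ G (s, t0) := le_of_tendsto_of_tendsto' hGlim hGlim' hineq
      have ht0pos : ∀ i, 0 < t0 i := fun i => (ht0 i).1
      rw [Dphi_coe φ L _ _ ht0pos, Dphi_coe φ L _ _ ht0pos]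
      exact EReal.coe_le_coe_iff.mpr hG
    have hqproj : IsPhiProj φ L M t0 q :=
      ⟨hqM, le_antisymm (le_iInf₂ hqle) (iInf₂_le q hqM)⟩
    exact (hSstar t0 ht0N q).mp hqproj
  -- reduce continuity within N at t0 to sequences
  rw [ContinuousWithinAt]
  rw [tendsto_iff_seq_tendsto]
  intro u hu
  rw [tendsto_nhdsWithin_iff] at hu
  obtain ⟨hu1, hu2⟩ := hu
  obtain ⟨N0, hN0⟩ := eventually_atTop.mp hu2
  rw [← tendsto_add_atTop_iff_nat N0]
  set v : ℕ → Fin m → ℝ := fun n => u (n + N0) with hvdef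
  have hvN : ∀ n, v n ∈ N := fun n => hN0 (n + N0) (Nat.le_add_left _ _)
  have hvlim : Tendsto v atTop (𝓝 t0) := (tendsto_add_atTop_iff_nat N0).mpr hu1
  -- prove Sstar ∘ v → Sstar t0 by contradiction
  by_contra hcon
  rw [Metric.tendsto_atTop] at hcon
  push_neg at hcon
  obtain ⟨ε, hε, hfreq⟩ := hcon
  have hfreq' : ∀ N', ∃ n ≥ N', ε ≤ dist (Sstar (v n)) (Sstar t0) := hfreq
  obtain ⟨ψ, hψmono, hψ⟩ := Filter.extraction_of_frequently_atTop
    (Filter.frequently_atTop.mpr hfreq')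
  have hmemM : ∀ n, Sstar (v (ψ n)) ∈ M :=
    fun n => ((hSstar (v (ψ n)) (hvN (ψ n)) (Sstar (v (ψ n)))).mpr rfl).1
  obtain ⟨q, hqM, ψ2, hψ2mono, hψ2lim⟩ := hMcp.tendsto_subseq hmemM
  have hq : q = Sstar t0 := by
    apply key (fun n => v (ψ (ψ2 n))) (fun n => hvN _)
      (hvlim.comp ((hψmono.comp hψ2mono).tendsto_atTop)) q hqM
    exact hψ2lim
  have hdistlim : Tendsto (fun n => dist (Sstar (v (ψ (ψ2 n)))) (Sstar t0)) atTop
      (𝓝 (dist q (Sstar t0))) :=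
    (continuous_dist.comp (Continuous.prodMk continuous_id continuous_const)).continuousAt.tendsto.comp hψ2lim
  have : ε ≤ dist q (Sstar t0) :=
    ge_of_tendsto' hdistlim fun n => hψ (ψ2 n)
  rw [hq, dist_self] at this
  linarith
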